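/- Let G be a chordal graph and v any vertex of G. Then the graph G_v is chordal. -/

import Mathlib

/-- `G` has an induced cycle of length `n`, i.e. an injective map from `ZMod n` to the
vertices such that images are adjacent exactly when the indices are consecutive. -/
def SimpleGraph.HasInducedCycle {V : Type*} (G : SimpleGraph V) (n : ℕ) : Prop :=
  ∃ f : ZMod n → V, Function.Injective f ∧
    ∀ i j : ZMod n, G.Adj (f i) (f j) ↔ (j = i + 1 ∨ i = j + 1)

/-- A graph is chordal if it has no induced cycle of length greater than 3. -/
def SimpleGraph.Chordal {V : Type*} (G : SimpleGraph V) : Prop :=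
  ∀ n : ℕ, 4 ≤ n → ¬ G.HasInducedCycle n

/-- The graph `G_v` on the vertex set of `G`, whose edges are those of `G` together with all
pairs of distinct neighbours of `v`. -/
def SimpleGraph.gv {V : Type*} (G : SimpleGraph V) (v : V) : SimpleGraph V where
  Adj u w := u ≠ w ∧ (G.Adj u w ∨ (G.Adj v u ∧ G.Adj v w))
  symm := by
    constructor
    rintro u w ⟨h1, h2⟩
    exact ⟨h1.symm, h2.imp (fun h => h.symm) (fun h => ⟨h.2, h.1⟩)⟩
  loopless := ⟨fun u h => h.1 rfl⟩

/-- Let `G` be a chordal graph and `v` any vertex of `G`.  Then the graph `G_v` is chordal. -/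
theorem gv_chordal {V : Type*} [Fintype V] (G : SimpleGraph V) (hG : G.Chordal) (v : V) :
    (G.gv v).Chordal := by
  intro n hn hcyc
  obtain ⟨f, hfinj, hf⟩ := hcyc
  haveI : NeZero n := ⟨by omega⟩
  have hGle : ∀ a b, G.Adj a b → (G.gv v).Adj a b := fun a b h => ⟨h.ne, Or.inl h⟩
  -- nonzeroness of small casts in ZMod n
  have hcast0 : ∀ k : ℕ, 1 ≤ k → k < n → ((k : ℕ) : ZMod n) ≠ 0 := by
    intro k h1 h2 h
    rw [ZMod.natCast_eq_zero_iff] at h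
    exact absurd (Nat.le_of_dvd (by omega) h) (by omega)
  have h1z : (1 : ZMod n) ≠ 0 := by simpa using hcast0 1 le_rfl (by omega)
  have h2z : (2 : ZMod n) ≠ 0 := by
    have := hcast0 2 (by omega) (by omega); simpa using this
  have h3z : (3 : ZMod n) ≠ 0 := by
    have := hcast0 3 (by omega) (by omega); simpa using this
  by_cases hall : ∀ i : ZMod n, G.Adj (f i) (f (i + 1))
  · exact hG n hn ⟨f, hfinj, fun i j => ⟨fun h => (hf i j).1 (hGle _ _ h),
      fun h => h.elim (fun h => h ▸ hall i) (fun h => (h ▸ hall j).symm)⟩⟩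
  push_neg at hall
  obtain ⟨i, hne⟩ := hall
  have hedge : (G.gv v).Adj (f i) (f (i + 1)) := (hf i (i + 1)).2 (Or.inl rfl)
  have hvi : G.Adj v (f i) ∧ G.Adj v (f (i + 1)) := by
    rcases hedge.2 with h | h
    · exact absurd h hne
    · exact h
  -- v is not on the cycle
  have hvnot : ∀ k : ZMod n, f k ≠ v := by
    intro k hk
    have h1 : G.Adj (f k) (f i) := by rw [hk]; exact hvi.1
    have h2 : G.Adj (f k) (f (i + 1)) := by rw [hk]; exact hvi.2
    rcases (hf k i).1 (hGle _ _ h1) with h | h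
    · rcases (hf k (i + 1)).1 (hGle _ _ h2) with h' | h'
      · have hik : i = k := add_right_cancel h'
        exact h1z (by linear_combination hik - h)
      · exact h3z (by linear_combination - h' - h)
    · rw [h] at hk
      have := hvi.2
      rw [hk] at this
      exact G.irrefl this
  -- the only cycle vertices adjacent to v are f i and f (i+1)
  have hB : ∀ j : ZMod n, G.Adj v (f j) → j = i ∨ j = i + 1 := by
    intro j hj
    by_contra hcon
    push_neg at hcon
    obtain ⟨hji, hji1⟩ := hcon
    have e1 : (G.gv v).Adj (f j) (f i) :=
      ⟨fun h => hji (hfinj h), Or.inr ⟨hj, hvi.1⟩⟩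
    have e2 : (G.gv v).Adj (f j) (f (i + 1)) :=
      ⟨fun h => hji1 (hfinj h), Or.inr ⟨hj, hvi.2⟩⟩
    have hij : i = j + 1 := by
      rcases (hf j i).1 e1 with h | h
      · exact h
      · exact absurd h hji1
    rcases (hf j (i + 1)).1 e2 with h | h
    · exact hji (add_right_cancel h).symm
    · exact h3z (by linear_combination - h - hij)
  -- every cycle edge other than (f i, f (i+1)) is a G-edge
  have hC : ∀ j : ZMod n, j ≠ i → G.Adj (f j) (f (j + 1)) := by
    intro j hj
    have e : (G.gv v).Adj (f j) (f (j + 1)) := (hf j (j + 1)).2 (Or.inl rfl)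
    rcases e.2 with h | ⟨ha, hb⟩
    · exact h
    rcases hB j ha with h | h
    · exact absurd h hj
    rcases hB (j + 1) hb with h' | h'
    · exact absurd (show (2 : ZMod n) = 0 by linear_combination h' - h) h2z
    · exact absurd (add_right_cancel h') hj
  -- build an induced cycle of length n+1 in G
  haveI : NeZero (n + 1) := ⟨by omega⟩
  haveI : Fact (1 < n + 1) := ⟨by omega⟩
  set g : ZMod (n + 1) → V := fun x => if x = 0 then v else f (i + (x.val : ZMod n)) with hg
  have hvlt : ∀ a : ZMod (n + 1), a.val ≤ n := fun a => by
    have := ZMod.val_lt a; omega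
  have hvpos : ∀ a : ZMod (n + 1), a ≠ 0 → 1 ≤ a.val := by
    intro a ha
    have := (ZMod.val_eq_zero a).not.mpr ha
    omega
  -- successor characterization in ZMod (n+1)
  have hsucc : ∀ a b : ZMod (n + 1), b = a + 1 ↔
      ((a.val < n ∧ b.val = a.val + 1) ∨ (a.val = n ∧ b.val = 0)) := by
    intro a b
    have hv1 : (a + 1).val = (a.val + 1) % (n + 1) := by
      rw [ZMod.val_add, ZMod.val_one]
    constructor
    · intro h
      rw [h, hv1]
      have := hvlt a
      rcases eq_or_lt_of_le this with h' | h'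
      · right
        constructor
        · exact h'
        · rw [h']
          simp
      · left
        exact ⟨h', Nat.mod_eq_of_lt (by omega)⟩
    · intro h
      apply ZMod.val_injective
      rw [hv1]
      rcases h with ⟨h1, h2⟩ | ⟨h1, h2⟩
      · rw [h2]; exact (Nat.mod_eq_of_lt (by omega)).symm
      · rw [h2, h1]; simp
  -- congruence of val-casts into ZMod n
  have hcc : ∀ p q : ℕ, ((p : ZMod n) = (q : ZMod n)) ↔ p % n = q % n :=
    fun p q => ZMod.natCast_eq_natCast_iff' p q n
  have hmod : ∀ p : ℕ, p ≤ n + 1 → p % n = if p < n then p else p - n := by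
    intro p hp
    split
    · exact Nat.mod_eq_of_lt ‹_›
    · have hlt : p - n < n := by omega
      have hmm : p % n = (p - n) % n := by
        conv_lhs => rw [show p = p - n + n by omega]
        rw [Nat.add_mod_right]
      rw [hmm, Nat.mod_eq_of_lt hlt]
  -- injectivity of g
  have hginj : Function.Injective g := by
    intro a b hab
    by_cases ha : a = 0 <;> by_cases hb : b = 0
    · rw [ha, hb]
    · rw [hg] at hab
      simp only [ha, if_pos, if_neg hb] at hab
      exact absurd hab.symm (hvnot _)
    · rw [hg] at hab
      simp only [hb, if_pos, if_neg ha] at hab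
      exact absurd hab (hvnot _)
    · rw [hg] at hab
      simp only [if_neg ha, if_neg hb] at hab
      have := hfinj hab
      have hcast : ((a.val : ℕ) : ZMod n) = ((b.val : ℕ) : ZMod n) := by
        have := add_left_cancel this
        exact this
      rw [hcc] at hcast
      have h1 := hvlt a
      have h2 := hvlt b
      have h3 := hvpos a ha
      have h4 := hvpos b hb
      apply ZMod.val_injective
      rw [hmod a.val (by omega), hmod b.val (by omega)] at hcast
      split_ifs at hcast <;> omega
  -- adjacency to v among g-values
  have hkey : ∀ b : ZMod (n + 1), b ≠ 0 → (G.Adj v (g b) ↔ (b.val = 1 ∨ b.val = n)) := by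
    intro b hb
    rw [hg]
    simp only [if_neg hb]
    constructor
    · intro h
      rcases hB _ h with h' | h'
      · -- i + cast = i, so cast = 0, so n ∣ b.val
        have : ((b.val : ℕ) : ZMod n) = 0 := by
          have := add_left_cancel (h'.trans (add_zero i).symm)
          exact this
        rw [ZMod.natCast_eq_zero_iff] at this
        have h5 := Nat.le_of_dvd (hvpos b hb) this
        have := hvlt b
        right; omega
      · have : ((b.val : ℕ) : ZMod n) = ((1 : ℕ) : ZMod n) := by
          have := add_left_cancel h'
          simpa using this
        rw [hcc] at this
        have h1 := hvlt b
        have h2 := hvpos b hb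
        rw [hmod b.val (by omega), hmod 1 (by omega)] at this
        split_ifs at this <;> omega
    · intro h
      rcases h with h | h
      · rw [h]
        simpa using hvi.2
      · rw [h]
        have : ((n : ℕ) : ZMod n) = 0 := ZMod.natCast_self n
        rw [this]
        simpa using hvi.1
  -- the consecutive-index edges among nonzero g-values are G-edges
  have hstep : ∀ a b : ZMod (n + 1), a ≠ 0 → b ≠ 0 → b.val = a.val + 1 →
      G.Adj (g a) (g b) := by
    intro a b ha hb hab
    rw [hg]
    simp only [if_neg ha, if_neg hb]
    have h1 := hvlt a
    have h2 := hvlt b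
    have h3 := hvpos a ha
    have hcast : ((b.val : ℕ) : ZMod n) = ((a.val : ℕ) : ZMod n) + 1 := by
      rw [hab]; push_cast; ring
    rw [hcast, ← add_assoc]
    apply hC
    intro hcon
    have : ((a.val : ℕ) : ZMod n) = 0 := by
      have := add_left_cancel (hcon.trans (add_zero i).symm)
      exact this
    rw [ZMod.natCast_eq_zero_iff] at this
    exact absurd (Nat.le_of_dvd (by omega) this) (by omega)
  -- the wrap-around non-edge: g has val n ↦ f i, val 1 ↦ f (i+1)
  have hwrapa : ∀ a : ZMod (n + 1), a.val = n → g a = f i := by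
    intro a h
    have ha : a ≠ 0 := by
      intro h0; rw [h0] at h; simp at h; omega
    rw [hg]
    simp only [if_neg ha]
    rw [h, ZMod.natCast_self, add_zero]
  have hwrapb : ∀ a : ZMod (n + 1), a.val = 1 → g a = f (i + 1) := by
    intro a h
    have ha : a ≠ 0 := by
      intro h0; rw [h0] at h; simp at h
    rw [hg]
    simp only [if_neg ha]
    rw [h]
    norm_num
  -- adjacency characterization for g
  apply hG (n + 1) (by omega)
  refine ⟨g, hginj, fun a b => ?_⟩
  constructor
  · intro h
    by_cases ha : a = 0 <;> by_cases hb : b = 0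
    · exfalso; rw [ha, hb] at h; exact G.irrefl h
    · -- a = 0 : G.Adj v (g b)
      have hv : G.Adj v (g b) := by
        rw [hg] at h ⊢; simp only [ha, if_pos] at h; exact h
      rcases (hkey b hb).1 hv with h' | h'
      · left
        rw [hsucc]
        left
        rw [ha]
        simp only [ZMod.val_zero]
        exact ⟨by omega, by omega⟩
      · right
        rw [hsucc]
        right
        rw [ha]
        exact ⟨h', by simp⟩
    · -- b = 0 : G.Adj v (g a)
      have hv : G.Adj v (g a) := by
        rw [hg] at h ⊢; simp only [hb, if_pos] at h; exact h.symm
      rcases (hkey a ha).1 hv with h' | h'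
      · right
        rw [hsucc]
        left
        rw [hb]
        simp only [ZMod.val_zero]
        exact ⟨by omega, by omega⟩
      · left
        rw [hsucc]
        right
        rw [hb]
        exact ⟨h', by simp⟩
    · -- both nonzero
      have hadj : (G.gv v).Adj (g a) (g b) := hGle _ _ h
      have h1 := hvlt a
      have h2 := hvlt b
      have h3 := hvpos a ha
      have h4 := hvpos b hb
      rw [hg] at hadj
      simp only [if_neg ha, if_neg hb] at hadj
      rcases (hf _ _).1 hadj with h' | h'
      · -- i + bval = i + aval + 1
        have hcast : ((b.val : ℕ) : ZMod n) = ((a.val + 1 : ℕ) : ZMod n) := by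
          have := add_left_cancel (h'.trans (add_assoc i _ 1))
          push_cast
          exact this
        rw [hcc] at hcast
        have hq : b.val = a.val + 1 ∨ (a.val = n ∧ b.val = 1) := by
          rw [hmod b.val (by omega), hmod (a.val + 1) (by omega)] at hcast
          split_ifs at hcast <;> omega
        rcases hq with hq | ⟨hqa, hqb⟩
        · left; rw [hsucc]; left; exact ⟨by omega, hq⟩
        · -- this is the forbidden pair f i, f (i+1)
          exfalso
          rw [hwrapa a hqa, hwrapb b hqb] at h
          exact hne h
      · -- i + aval = i + bval + 1 : symmetric
        have hcast : ((a.val : ℕ) : ZMod n) = ((b.val + 1 : ℕ) : ZMod n) := by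
          have := add_left_cancel (h'.trans (add_assoc i _ 1))
          push_cast
          exact this
        rw [hcc] at hcast
        have hq : a.val = b.val + 1 ∨ (b.val = n ∧ a.val = 1) := by
          rw [hmod a.val (by omega), hmod (b.val + 1) (by omega)] at hcast
          split_ifs at hcast <;> omega
        rcases hq with hq | ⟨hqa, hqb⟩
        · right; rw [hsucc]; left; exact ⟨by omega, hq⟩
        · exfalso
          rw [hwrapa b hqa, hwrapb a hqb] at h
          exact hne h.symm
  · intro h
    rcases h with h | h
    · -- b = a + 1
      rw [hsucc] at h
      rcases h with ⟨h1, h2⟩ | ⟨h1, h2⟩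
      · by_cases ha : a = 0
        · -- g a = v, b.val = 1
          have hb : b ≠ 0 := by
            intro h0; rw [h0] at h2; simp at h2
          have hb1 : b.val = 1 := by
            rw [ha] at h2; simpa using h2
          have : g a = v := by rw [hg]; simp [ha]
          rw [this, hwrapb b hb1]
          exact hvi.2
        · have hb : b ≠ 0 := by
            intro h0; rw [h0] at h2; simp at h2
          exact hstep a b ha hb h2
      · -- wrap around: a.val = n, b.val = 0 so b = 0, g b = v
        have hb : b = 0 := (ZMod.val_eq_zero b).mp h2
        have : g b = v := by rw [hg]; simp [hb]
        rw [this, hwrapa a h1]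
        exact hvi.1.symm
    · -- a = b + 1
      rw [hsucc] at h
      rcases h with ⟨h1, h2⟩ | ⟨h1, h2⟩
      · by_cases hb : b = 0
        · have ha : a ≠ 0 := by
            intro h0; rw [h0] at h2; simp at h2
          have ha1 : a.val = 1 := by
            rw [hb] at h2; simpa using h2
          have : g b = v := by rw [hg]; simp [hb]
          rw [this, hwrapb a ha1]
          exact hvi.2.symm
        · have ha : a ≠ 0 := by
            intro h0; rw [h0] at h2; simp at h2
          exact (hstep b a hb ha h2).symm
      · have ha : a = 0 := (ZMod.val_eq_zero a).mp h2
        have : g a = v := by rw [hg]; simp [ha]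
        rw [this, hwrapa b h1]
        exact hvi.1
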